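/- Let W be a 6-dimensional complex vector space. Then Ω := ℙ(W ∧ ∧²W) = {[v ∧ α] : v ∈ W, α ∈ ∧²W, v ∧ α ≠ 0} ⊂ ℙ(∧³W) satisfies: for every [β] ∈ Ω that is not totally decomposable (i.e. [β] ∉ G(3,W)), there is exactly one [v] ∈ ℙ(W) with β ∈ v ∧ ∧²W. -/

import Mathlib

open ExteriorAlgebra Module

/-- Contraction by a dual element lowers the degree of a multivector by one, and kills
degree-zero elements. -/
private lemma contract_mem_exteriorPower {W : Type} [AddCommGroup W] [Module ℂ W]
    (d : Module.Dual ℂ W) {n : ℕ} {x : ExteriorAlgebra ℂ W} (hx : x ∈ ⋀[ℂ]^n W) :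
    CliffordAlgebra.contractLeft (Q := (0 : QuadraticForm ℂ W)) d x ∈ ⋀[ℂ]^(n - 1) W ∧
      (n = 0 → CliffordAlgebra.contractLeft (Q := (0 : QuadraticForm ℂ W)) d x = 0) := by
  induction hx using Submodule.pow_induction_on_left' with
  | algebraMap r =>
      refine ⟨?_, fun _ => ?_⟩ <;>
        simp [CliffordAlgebra.contractLeft_algebraMap]
  | add x y i hx hy ihx ihy =>
      exact ⟨by simpa using add_mem ihx.1 ihy.1, fun hi => by
        simp [map_add, ihx.2 hi, ihy.2 hi]⟩
  | mem_mul m hm i x hx ih =>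
      obtain ⟨u, rfl⟩ := hm
      refine ⟨?_, fun hi => by exact absurd hi (Nat.succ_ne_zero i)⟩
      rw [CliffordAlgebra.contractLeft_ι_mul]
      simp only [Nat.succ_sub_one]
      refine sub_mem (Submodule.smul_mem _ _ hx) ?_
      rcases i with _ | j
      · rw [ih.2 rfl, mul_zero]; exact zero_mem _
      · have h1 : CliffordAlgebra.contractLeft (Q := (0 : QuadraticForm ℂ W)) d x
            ∈ ⋀[ℂ]^j W := by simpa using ih.1
        have := Submodule.mul_mem_mul (LinearMap.mem_range_self (ι ℂ (M := W)) u) h1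
        rwa [← pow_succ'] at this

/-- For a 6-dimensional complex vector space `W`, every class
`[β] ∈ Ω ∖ G(3,W)` (a nonzero 3-vector of the form `v ∧ α`, `α ∈ ⋀²W`, which is not totally
decomposable) has a unique 'vector part' `[v] ∈ ℙ(W)`: if `β = v ∧ α = v' ∧ α'` then `v'` is
proportional to `v`. -/
theorem omega_vector_part_unique
    (W : Type) [AddCommGroup W] [Module ℂ W] [FiniteDimensional ℂ W]
    (hdim : finrank ℂ W = 6)
    (β : ExteriorAlgebra ℂ W) (hβ3 : β ∈ ⋀[ℂ]^3 W) (hβ0 : β ≠ 0)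
    (hG : ¬ ∃ w₁ w₂ w₃ : W,
      β = ExteriorAlgebra.ι ℂ w₁ * ExteriorAlgebra.ι ℂ w₂ * ExteriorAlgebra.ι ℂ w₃)
    (v v' : W) (α α' : ExteriorAlgebra ℂ W)
    (hα : α ∈ ⋀[ℂ]^2 W) (hα' : α' ∈ ⋀[ℂ]^2 W)
    (h : β = ExteriorAlgebra.ι ℂ v * α)
    (h' : β = ExteriorAlgebra.ι ℂ v' * α') :
    ∃ c : ℂ, c ≠ 0 ∧ v' = c • v := by
  have hv0 : v ≠ 0 := by
    rintro rfl; exact hβ0 (by simpa using h)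
  have hv'0 : v' ≠ 0 := by
    rintro rfl; exact hβ0 (by simpa using h')
  by_cases hli : LinearIndependent ℂ ![v, v']
  · -- independence leads to a contradiction with non-decomposability
    exfalso
    have hvv' : v' ≠ v := by
      have := (LinearIndependent.pair_iff' hv0).mp hli 1
      rw [one_smul] at this
      exact fun e => this e.symm
    -- dual functionals via a basis extending {v, v'}
    have hs : LinearIndepOn ℂ id (Set.range ![v, v']) :=
      hli.linearIndepOn_id
    set B := Module.Basis.extend hs with hB
    have hvmem : v ∈ hs.extend (Set.subset_univ _) :=
      hs.subset_extend _ ⟨0, by simp⟩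
    have hv'mem : v' ∈ hs.extend (Set.subset_univ _) :=
      hs.subset_extend _ ⟨1, by simp⟩
    set f : Module.Dual ℂ W := B.coord ⟨v, hvmem⟩ with hf
    set f' : Module.Dual ℂ W := B.coord ⟨v', hv'mem⟩ with hf'
    have hBv : B ⟨v, hvmem⟩ = v := Basis.extend_apply_self hs _
    have hBv' : B ⟨v', hv'mem⟩ = v' := Basis.extend_apply_self hs _
    have hfv : f v = 1 := by
      have key : f (B ⟨v, hvmem⟩) = 1 := by
        rw [hf, Basis.coord_apply, Basis.repr_self, Finsupp.single_eq_same]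
      rwa [hBv] at key
    have hf'v' : f' v' = 1 := by
      have key : f' (B ⟨v', hv'mem⟩) = 1 := by
        rw [hf', Basis.coord_apply, Basis.repr_self, Finsupp.single_eq_same]
      rwa [hBv'] at key
    have hf'v : f' v = 0 := by
      have key : f' (B ⟨v, hvmem⟩) = 0 := by
        rw [hf', Basis.coord_apply, Basis.repr_self]
        exact Finsupp.single_eq_of_ne (fun e => hvv' (congrArg Subtype.val e))
      rwa [hBv] at key
    -- contractions
    have hvβ : ι ℂ v * β = 0 := by rw [h, ← mul_assoc, ι_sq_zero, zero_mul]
    have hv'β : ι ℂ v' * β = 0 := by rw [h', ← mul_assoc, ι_sq_zero, zero_mul]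
    set γ := CliffordAlgebra.contractLeft (Q := (0 : QuadraticForm ℂ W)) f β with hγdef
    set η := CliffordAlgebra.contractLeft (Q := (0 : QuadraticForm ℂ W)) f' β with hηdef
    set δ := CliffordAlgebra.contractLeft (Q := (0 : QuadraticForm ℂ W)) f' γ with hδdef
    have e1 : β = ι ℂ v * γ := by
      have key := CliffordAlgebra.contractLeft_ι_mul (Q := (0 : QuadraticForm ℂ W))
        (d := f) v β
      rw [hvβ, map_zero, hfv, one_smul] at key
      exact sub_eq_zero.mp key.symm
    have e2 : β = ι ℂ v' * η := by
      have key := CliffordAlgebra.contractLeft_ι_mul (Q := (0 : QuadraticForm ℂ W))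
        (d := f') v' β
      rw [hv'β, map_zero, hf'v', one_smul] at key
      exact sub_eq_zero.mp key.symm
    have e3 : η = -(ι ℂ v * δ) := by
      rw [hηdef]
      conv_lhs => rw [e1]
      rw [CliffordAlgebra.contractLeft_ι_mul, hf'v, zero_smul, zero_sub]
    have hγ2 : γ ∈ ⋀[ℂ]^2 W := by
      simpa using (contract_mem_exteriorPower f hβ3).1
    have hδ1 : δ ∈ ⋀[ℂ]^1 W := by
      simpa using (contract_mem_exteriorPower f' hγ2).1
    obtain ⟨w, hw⟩ : ∃ w : W, ι ℂ w = δ := by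
      have h1 : (⋀[ℂ]^1 W : Submodule ℂ (ExteriorAlgebra ℂ W))
          = LinearMap.range (ι ℂ : W →ₗ[ℂ] ExteriorAlgebra ℂ W) := pow_one _
      rw [h1] at hδ1
      exact hδ1
    refine hG ⟨v', v, -w, ?_⟩
    rw [e2, e3, map_neg, mul_neg, mul_assoc, hw, mul_neg, mul_neg]
  · rw [LinearIndependent.pair_iff' hv0] at hli
    push_neg at hli
    obtain ⟨c, hc⟩ := hli
    refine ⟨c, fun h0 => ?_, hc.symm⟩
    rw [h0, zero_smul] at hc
    exact hv'0 hc.symm
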